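/- arXiv:2205.10769 — 3 statements merged into one kernel-verified Lean document; each statement's English description precedes it below -/
import Mathlib

section
/- Let A be an invertible d×d real matrix with ℝ^d = E^s ⊕ E^u, where there exist 0 < λ_s < 1 < λ_u and C < ∞ with ‖Aⁿv‖ ≤ C λ_sⁿ ‖v‖ for v ∈ E^s, n ≥ 0, and ‖A^{-n}v‖ ≤ C λ_u^{-n} ‖v‖ for v ∈ E^u, n ≥ 0. Let T(x) = A x + a. Then for any two bi-infinite trajectories (x_k), (y_k) of T, the affine subspaces x₀ + E^u and y₀ + E^s intersect, and for any z₀ in the intersection the trajectory z_k = T^k z₀ satisfies ‖z_k − x_k‖ ≤ C' (λ_s^{|k|} + λ_u^{-|k|})·‖x₀−y₀‖ for all k < 0 and ‖z_k − y_k‖ ≤ C' (λ_s^{|k|} + λ_u^{-|k|})·‖x₀−y₀‖ for all k ≥ 0, for some constant C' depending only on A and the splitting. -/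
theorem hyperbolic_affine_gluing (d : ℕ)
    (A : EuclideanSpace ℝ (Fin d) ≃ₗ[ℝ] EuclideanSpace ℝ (Fin d))
    (Es Eu : Submodule ℝ (EuclideanSpace ℝ (Fin d)))
    (C lams lamu : ℝ) (hlams : 0 < lams) (h1 : lams < 1) (h2 : 1 < lamu) (hC : 0 < C)
    (hsplit : Es ⊓ Eu = ⊥) (hspan : Es ⊔ Eu = ⊤)
    (hinvs : ∀ v ∈ Es, A v ∈ Es) (hinvu : ∀ v ∈ Eu, A v ∈ Eu)
    (hs : ∀ v ∈ Es, ∀ n : ℕ, ‖(A ^ n) v‖ ≤ C * lams ^ n * ‖v‖)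
    (hu : ∀ v ∈ Eu, ∀ n : ℕ, ‖(A.symm ^ n) v‖ ≤ C * lamu ^ (-(n : ℤ)) * ‖v‖) :
    ∃ C' > (0 : ℝ), ∀ (a : EuclideanSpace ℝ (Fin d)) (x y : ℤ → EuclideanSpace ℝ (Fin d)),
      (∀ k, A (x k) + a = x (k + 1)) → (∀ k, A (y k) + a = y (k + 1)) →
      (∃ w, w - x 0 ∈ Eu ∧ w - y 0 ∈ Es) ∧
        ∀ z : ℤ → EuclideanSpace ℝ (Fin d), (∀ k, A (z k) + a = z (k + 1)) →
          z 0 - x 0 ∈ Eu → z 0 - y 0 ∈ Es →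
          (∀ k < 0, ‖z k - x k‖ ≤ C' * (lams ^ (-k) + lamu ^ k) * ‖x 0 - y 0‖) ∧
          (∀ k ≥ 0, ‖z k - y k‖ ≤ C' * (lams ^ k + lamu ^ (-k)) * ‖x 0 - y 0‖) := by
  classical
  have hcompl : IsCompl Es Eu := ⟨disjoint_iff.2 hsplit, codisjoint_iff.2 hspan⟩
  set f : EuclideanSpace ℝ (Fin d) →ₗ[ℝ] EuclideanSpace ℝ (Fin d) :=
    Es.subtype.comp (Es.projectionOnto Eu hcompl) with hf
  set F := LinearMap.toContinuousLinearMap f with hF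
  set M : ℝ := ‖F‖ + 1 with hMdef
  have hM : 0 < M := by positivity
  have hMf : ∀ v, ‖f v‖ ≤ M * ‖v‖ := by
    intro v
    have := F.le_opNorm v
    have h0 := norm_nonneg v
    calc ‖f v‖ = ‖F v‖ := rfl
    _ ≤ ‖F‖ * ‖v‖ := F.le_opNorm v
    _ ≤ M * ‖v‖ := by nlinarith
  have hfdec : ∀ s ∈ Es, ∀ u ∈ Eu, f (s + u) = s := by
    intro s hsm u hum
    have h1 : f s = s := by
      simpa [hf] using congrArg (Es.subtype) (Submodule.projectionOnto_apply_left hcompl ⟨s, hsm⟩)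
    have h2 : f u = 0 := by
      simp [hf, Submodule.projectionOnto_apply_of_mem_right hcompl hum]
    rw [map_add, h1, h2, add_zero]
  refine ⟨C * (M + 1) + 1, by positivity, ?_⟩
  intro a x y hx hy
  constructor
  · -- existence of w
    set v := y 0 - x 0 with hv
    refine ⟨x 0 + (v - f v), ?_, ?_⟩
    · have : v - f v ∈ Eu := by
        have hmem : v ∈ Es ⊔ Eu := by rw [hspan]; trivial
        obtain ⟨s, hsm, u, hum, hsu⟩ := Submodule.mem_sup.1 hmem
        have : f v = s := by rw [← hsu]; exact hfdec s hsm u hum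
        rw [this, ← hsu]
        simpa using hum
      simpa using this
    · have hfv : f v ∈ Es := by
        rw [hf]; exact (Es.projectionOnto Eu hcompl v).2
      have : x 0 + (v - f v) - y 0 = -(f v) := by
        rw [hv]; abel
      rw [this]
      exact neg_mem hfv
  · intro z hz hzx hzy
    -- key identities
    have keypos : ∀ n : ℕ, z (n : ℤ) - y (n : ℤ) = (A ^ n) (z 0 - y 0) := by
      intro n
      induction n with
      | zero => simp
      | succ n ih =>
        have e1 := hz (n : ℤ)
        have e2 := hy (n : ℤ)
        have : z ((n : ℤ) + 1) - y ((n : ℤ) + 1) = A (z n - y n) := by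
          rw [← e1, ← e2, map_sub]; abel
        rw [show ((n + 1 : ℕ) : ℤ) = (n : ℤ) + 1 by push_cast; ring, this, ih,
          pow_succ']
        rfl
    have keyneg : ∀ n : ℕ, z (-(n : ℤ)) - x (-(n : ℤ)) = (A.symm ^ n) (z 0 - x 0) := by
      intro n
      induction n with
      | zero => simp
      | succ n ih =>
        have e1 := hz (-(n : ℤ) - 1)
        have e2 := hx (-(n : ℤ) - 1)
        rw [sub_add_cancel] at e1 e2
        have estep : A (z (-(n : ℤ) - 1) - x (-(n : ℤ) - 1)) = z (-(n : ℤ)) - x (-(n : ℤ)) := by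
          rw [map_sub, ← e1, ← e2]; abel
        have : z (-(n : ℤ) - 1) - x (-(n : ℤ) - 1) = A.symm (z (-(n : ℤ)) - x (-(n : ℤ))) := by
          rw [← estep]; simp
        rw [show (-((n + 1 : ℕ) : ℤ)) = -(n : ℤ) - 1 by push_cast; ring, this, ih, pow_succ']
        rfl
    -- norm bounds for z0
    have hdec : z 0 - y 0 = f (x 0 - y 0) := by
      have : x 0 - y 0 = (z 0 - y 0) + -(z 0 - x 0) := by abel
      rw [this, hfdec _ hzy _ (neg_mem hzx)]
    have hb1 : ‖z 0 - y 0‖ ≤ M * ‖x 0 - y 0‖ := hdec ▸ hMf _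
    have hb2 : ‖z 0 - x 0‖ ≤ (M + 1) * ‖x 0 - y 0‖ := by
      have : z 0 - x 0 = (z 0 - y 0) - (x 0 - y 0) := by abel
      rw [this]
      calc ‖(z 0 - y 0) - (x 0 - y 0)‖ ≤ ‖z 0 - y 0‖ + ‖x 0 - y 0‖ := norm_sub_le _ _
      _ ≤ M * ‖x 0 - y 0‖ + ‖x 0 - y 0‖ := by linarith
      _ = (M + 1) * ‖x 0 - y 0‖ := by ring
    have hxy0 : (0:ℝ) ≤ ‖x 0 - y 0‖ := norm_nonneg _
    constructor
    · intro k hk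
      obtain ⟨n, rfl⟩ := Int.exists_eq_neg_ofNat (le_of_lt hk)
      have hb := hu _ hzx n
      have hkey := keyneg n
      have hnorm : ‖z (-(n:ℤ)) - x (-(n:ℤ))‖ ≤ C * lamu ^ (-(n:ℤ)) * ‖z 0 - x 0‖ := hkey ▸ hb
      have hlu : (0:ℝ) < lamu ^ (-(n:ℤ)) := zpow_pos (by linarith) _
      have hls : (0:ℝ) ≤ lams ^ (-(-(n:ℤ))) := le_of_lt (zpow_pos hlams _)
      calc ‖z (-(n:ℤ)) - x (-(n:ℤ))‖ ≤ C * lamu ^ (-(n:ℤ)) * ‖z 0 - x 0‖ := hnorm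
      _ ≤ C * lamu ^ (-(n:ℤ)) * ((M + 1) * ‖x 0 - y 0‖) := by
          apply mul_le_mul_of_nonneg_left hb2; positivity
      _ ≤ (C * (M + 1) + 1) * (lams ^ (-(-(n:ℤ))) + lamu ^ (-(n:ℤ))) * ‖x 0 - y 0‖ := by
          nlinarith [mul_nonneg (mul_nonneg (by positivity : (0:ℝ) ≤ C * (M + 1) + 1) hls) hxy0,
            mul_nonneg hlu.le hxy0]
    · intro k hk
      obtain ⟨n, rfl⟩ := Int.eq_ofNat_of_zero_le hk
      have hb := hs _ hzy n
      have hkey := keypos n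
      have hnorm : ‖z (n:ℤ) - y (n:ℤ)‖ ≤ C * lams ^ n * ‖z 0 - y 0‖ := hkey ▸ hb
      have hlu : (0:ℝ) < lamu ^ (-(n:ℤ)) := zpow_pos (by linarith) _
      have hls : (0:ℝ) ≤ lams ^ n := le_of_lt (pow_pos hlams _)
      have hcast : lams ^ ((n:ℤ)) = lams ^ n := zpow_natCast _ _
      calc ‖z (n:ℤ) - y (n:ℤ)‖ ≤ C * lams ^ n * ‖z 0 - y 0‖ := hnorm
      _ ≤ C * lams ^ n * (M * ‖x 0 - y 0‖) := by
          apply mul_le_mul_of_nonneg_left hb1; positivity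
      _ ≤ (C * (M + 1) + 1) * (lams ^ (n:ℤ) + lamu ^ (-(n:ℤ))) * ‖x 0 - y 0‖ := by
          rw [hcast]
          nlinarith [mul_nonneg (mul_nonneg (by positivity : (0:ℝ) ≤ C + 1) hls) hxy0,
            mul_nonneg (mul_nonneg (by positivity : (0:ℝ) ≤ C * (M + 1) + 1) hlu.le) hxy0]
end

section
/- Let π be a transition matrix on a finite alphabet with π^M > 0 for some M. With the metric ρ(s,u) = ∑_{k∈ℤ} 2^{-|k|}·[s_k ≠ u_k] on A^ℤ, for any two admissible sequences s, u ∈ Σ_π there exists z ∈ Σ_π such that ρ(σ^k z, σ^k s) ≤ 3·2^{-(|k|−M)} for all k ≤ −M and ρ(σ^k z, σ^k u) ≤ 3·2^{-(k−M)} for all k ≥ M, where σ is the shift map. -/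
noncomputable def rho {A : Type*} [DecidableEq A] (s u : ℤ → A) : ℝ :=
  ∑' k : ℤ, (2 : ℝ) ^ (-|k|) * (if s k = u k then 0 else 1)

lemma geom_tail (N : ℕ) :
    HasSum (fun n : ℕ => if N < n then ((2:ℝ)⁻¹) ^ n else 0) ((2:ℝ) ^ (-(N:ℤ))) := by
  have hg : HasSum (fun n : ℕ => ((2:ℝ)⁻¹) ^ n * ((2:ℝ)⁻¹)^(N+1)) (2 * ((2:ℝ)⁻¹)^(N+1)) := by
    have := (hasSum_geometric_of_lt_one (by norm_num : (0:ℝ) ≤ 2⁻¹) (by norm_num)).mul_right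
      (((2:ℝ)⁻¹)^(N+1))
    rw [show (2:ℝ) * ((2:ℝ)⁻¹)^(N+1) = (1 - 2⁻¹)⁻¹ * ((2:ℝ)⁻¹)^(N+1) by norm_num]
    exact this
  have h2 : HasSum (fun n : ℕ => if N < n + (N+1) then ((2:ℝ)⁻¹) ^ (n + (N+1)) else 0)
      (2 * ((2:ℝ)⁻¹)^(N+1)) := by
    convert hg using 2 with n
    rw [if_pos (by omega), pow_add]
  replace h2 := (hasSum_nat_add_iff (f := fun n : ℕ => if N < n then ((2:ℝ)⁻¹) ^ n else 0) (N+1)).mp h2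
  have hz : (∑ i ∈ Finset.range (N+1), if N < i then ((2:ℝ)⁻¹) ^ i else 0) = 0 := by
    apply Finset.sum_eq_zero
    intro i hi
    rw [if_neg (by simp at hi; omega)]
  rw [hz, add_zero] at h2
  rw [show (2:ℝ) ^ (-(N:ℤ)) = 2 * ((2:ℝ)⁻¹)^(N+1) by
    rw [zpow_neg, zpow_natCast, ← inv_pow, pow_succ]
    ring]
  exact h2

lemma rho_le_of_agree {A : Type*} [DecidableEq A] (f g : ℤ → A) (N : ℕ)
    (h : ∀ j : ℤ, |j| ≤ (N:ℤ) → f j = g j) :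
    rho f g ≤ 3 * (2:ℝ) ^ (-(N:ℤ)) := by
  set b : ℤ → ℝ := fun j => if (N:ℤ) < |j| then (2:ℝ) ^ (-|j|) else 0 with hbdef
  have hbnat : ∀ n : ℕ, b n = (if N < n then ((2:ℝ)⁻¹) ^ n else 0) := by
    intro n
    simp only [hbdef, Nat.abs_cast, Nat.cast_lt]
    split <;> simp [zpow_neg, zpow_natCast, inv_pow]
  have h1 : HasSum (fun n : ℕ => b n) ((2:ℝ) ^ (-(N:ℤ))) := by
    simpa only [hbnat] using geom_tail N
  have h2 : HasSum (fun n : ℕ => b (-n)) ((2:ℝ) ^ (-(N:ℤ))) := by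
    have : ∀ n : ℕ, b (-n) = b n := by intro n; simp [hbdef]
    simpa only [this] using h1
  have hb : HasSum b (2 * (2:ℝ) ^ (-(N:ℤ))) := by
    have := h1.of_nat_of_neg h2
    have hb0 : b 0 = 0 := by simp [hbdef]
    rw [hb0, sub_zero] at this
    rw [two_mul]; exact this
  have hbnn : ∀ j : ℤ, 0 ≤ b j := by
    intro j
    simp only [hbdef]
    split
    · positivity
    · exact le_refl 0
  have hle : ∀ j : ℤ, (2:ℝ) ^ (-|j|) * (if f j = g j then 0 else 1) ≤ b j := by
    intro j
    by_cases hfg : f j = g j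
    · rw [if_pos hfg, mul_zero]
      exact hbnn j
    · rw [if_neg hfg, mul_one]
      have hN : (N:ℤ) < |j| := by
        by_contra hc
        exact hfg (h j (le_of_not_gt hc))
      show (2:ℝ) ^ (-|j|) ≤ if (N:ℤ) < |j| then (2:ℝ) ^ (-|j|) else 0
      rw [if_pos hN]
  have hnn : ∀ j : ℤ, 0 ≤ (2:ℝ) ^ (-|j|) * (if f j = g j then 0 else 1) := by
    intro j; positivity
  have hsum : Summable (fun j : ℤ => (2:ℝ) ^ (-|j|) * (if f j = g j then 0 else 1)) :=
    Summable.of_nonneg_of_le hnn hle hb.summable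
  calc rho f g ≤ ∑' j : ℤ, b j := Summable.tsum_le_tsum hle hsum hb.summable
    _ = 2 * (2:ℝ) ^ (-(N:ℤ)) := hb.tsum_eq
    _ ≤ 3 * (2:ℝ) ^ (-(N:ℤ)) := by
        have : (0:ℝ) < (2:ℝ) ^ (-(N:ℤ)) := by positivity
        nlinarith

theorem mixing_shift_gluing_metric {A : Type*} [Fintype A] [DecidableEq A]
    (P : A → A → Prop) (M : ℕ)
    (hpos : ∀ i j : A, ∃ w : ℕ → A, w 0 = i ∧ w M = j ∧ ∀ k < M, P (w k) (w (k + 1)))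
    (s u : ℤ → A) (hs : ∀ k, P (s k) (s (k + 1))) (hu : ∀ k, P (u k) (u (k + 1))) :
    ∃ z : ℤ → A, (∀ k, P (z k) (z (k + 1))) ∧
      (∀ k : ℤ, k ≤ -(M : ℤ) →
        rho (fun j => z (j + k)) (fun j => s (j + k)) ≤ 3 * (2 : ℝ) ^ (-(|k| - (M : ℤ)))) ∧
      (∀ k : ℤ, (M : ℤ) ≤ k →
        rho (fun j => z (j + k)) (fun j => u (j + k)) ≤ 3 * (2 : ℝ) ^ (-(k - (M : ℤ)))) := by
  obtain ⟨w, hw0, hwM, hwP⟩ := hpos (s (-(M:ℤ))) (u 0)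
  set z : ℤ → A := fun j => if j < 0 then (if j ≤ -(M:ℤ) then s j else w (j + M).toNat) else u j
    with hzdef
  have hzu : ∀ j : ℤ, 0 ≤ j → z j = u j := by
    intro j hj
    simp only [hzdef, if_neg (not_lt.mpr hj)]
  have hzs : ∀ j : ℤ, j ≤ -(M:ℤ) → z j = s j := by
    intro j hj
    by_cases hjlt : j < 0
    · simp only [hzdef, if_pos hjlt, if_pos hj]
    · -- j = 0 and M = 0
      have hM : M = 0 := by omega
      have hj0 : j = 0 := by omega
      subst hj0
      rw [hzu 0 le_rfl]
      have := hwM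
      rw [hM] at this
      rw [← this, hw0, hM]
      norm_num
  have hzw : ∀ j : ℤ, -(M:ℤ) ≤ j → j ≤ 0 → z j = w (j + M).toNat := by
    intro j hj1 hj2
    by_cases hjlt : j < 0
    · by_cases hjle : j ≤ -(M:ℤ)
      · have : j = -(M:ℤ) := le_antisymm hjle hj1
        subst this
        simp only [hzdef, if_pos hjlt, if_pos le_rfl]
        rw [show (-(M:ℤ) + M).toNat = 0 by omega, hw0]
      · simp only [hzdef, if_pos hjlt, if_neg hjle]
    · have hj0 : j = 0 := by omega
      subst hj0
      rw [hzu 0 le_rfl, show ((0:ℤ) + M).toNat = M by omega, hwM]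
  refine ⟨z, ?_, ?_, ?_⟩
  · intro k
    rcases le_or_gt 0 k with hk | hk
    · rw [hzu k hk, hzu (k+1) (by omega)]
      exact hu k
    · by_cases hkM : k + 1 ≤ -(M:ℤ)
      · rw [hzs k (by omega), hzs (k+1) hkM]
        exact hs k
      · -- -M ≤ k < 0
        have hk1 : -(M:ℤ) ≤ k := by omega
        rw [hzw k hk1 (by omega), hzw (k+1) (by omega) (by omega)]
        have ht : (k + 1 + M).toNat = (k + M).toNat + 1 := by omega
        rw [ht]
        exact hwP ((k + M).toNat) (by omega)
  · intro k hk
    have hkM : (M:ℤ) ≤ |k| := by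
      rw [abs_of_nonpos (by omega)]; omega
    set N : ℕ := (|k| - M).toNat with hN
    have hNe : -(|k| - (M:ℤ)) = -(N:ℤ) := by omega
    rw [hNe]
    apply rho_le_of_agree
    intro j hj
    have : j + k ≤ -(M:ℤ) := by
      have h1 : j ≤ (N:ℤ) := le_trans (le_abs_self j) hj
      have h2 : |k| = -k := abs_of_nonpos (by omega)
      omega
    rw [hzs _ this]
  · intro k hk
    set N : ℕ := (k - M).toNat with hN
    have hNe : -(k - (M:ℤ)) = -(N:ℤ) := by omega
    rw [hNe]
    apply rho_le_of_agree
    intro j hj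
    have : 0 ≤ j + k := by
      have h1 : -(N:ℤ) ≤ j := neg_le_of_abs_le hj
      omega
    rw [hzu _ this]
end

section
/- Let T(x) = x(1+a x^α) on [0, c] with a > 0, α > 1, c(1+ac^α)=1. Then for the inverse branch τ⁻¹ of T (mapping [0,1] onto [0,c]) and for every summable function φ : ℤ₊ → ℝ≥0, there exist trajectories that violate the strong gluing bound: specifically, there exist v ∈ (0,1] and infinitely many n with τ^{-n}(v) > φ(n)·v. -/
theorem strong_gluing_violated (a α : ℝ) (ha : 0 < a) (hα : 1 < α)
    (τ : ℝ → ℝ) (hτ : ∀ v, τ v = v + a * v ^ (1 + α)) :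
    ∀ φ : ℕ → ℝ, (∀ n, 0 ≤ φ n) → Summable φ →
      ∃ v : ℝ, v ∈ Set.Ioc (0 : ℝ) 1 ∧
        {n : ℕ | ∃ w : ℝ, 0 ≤ w ∧ τ^[n] w = v ∧ φ n * v < w}.Infinite := by
  intro φ hφ0 hφsum
  have hexp : (0:ℝ) ≤ 1 + α := by linarith
  have hτ0 : τ 0 = 0 := by
    rw [hτ]
    rw [Real.zero_rpow (by linarith : (1:ℝ) + α ≠ 0)]
    ring
  have hτcont : Continuous τ := by
    have h1 : Continuous fun x : ℝ => x ^ (1 + α) := by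
      rw [continuous_iff_continuousAt]
      intro x
      exact Real.continuousAt_rpow_const x (1 + α) (Or.inr hexp)
    have : Continuous fun x : ℝ => x + a * x ^ (1 + α) :=
      continuous_id.add (continuous_const.mul h1)
    convert this using 1
    funext x; exact hτ x
  -- key: for 0 ≤ y there is x ∈ [0,y] with τ x = y
  have key : ∀ y : ℝ, 0 ≤ y → ∃ x, 0 ≤ x ∧ x ≤ y ∧ τ x = y := by
    intro y hy
    have hmem : y ∈ Set.Icc (τ 0) (τ y) := by
      constructor
      · rw [hτ0]; exact hy
      · rw [hτ]
        have : 0 ≤ a * y ^ (1 + α) := by positivity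
        linarith
    have := intermediate_value_Icc hy hτcont.continuousOn hmem
    obtain ⟨x, hx, hxy⟩ := this
    exact ⟨x, hx.1, hx.2, hxy⟩
  -- the inverse branch
  set g : ℝ → ℝ := fun y => if h : 0 ≤ y then Classical.choose (key y h) else 0 with hg_def
  have hg : ∀ y : ℝ, 0 ≤ y → 0 ≤ g y ∧ g y ≤ y ∧ τ (g y) = y := by
    intro y hy
    simp only [hg_def, dif_pos hy]
    exact Classical.choose_spec (key y hy)
  set w : ℕ → ℝ := fun n => g^[n] 1 with hw_def
  have hw0 : w 0 = 1 := rfl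
  have hwsucc : ∀ n, w (n + 1) = g (w n) := by
    intro n; simp only [hw_def, Function.iterate_succ_apply']
  have hwpos : ∀ n, 0 < w n := by
    intro n
    induction n with
    | zero => rw [hw0]; norm_num
    | succ n ih =>
      rw [hwsucc]
      obtain ⟨h1, h2, h3⟩ := hg (w n) ih.le
      rcases h1.lt_or_eq with h | h
      · exact h
      · exfalso; rw [← h, hτ0] at h3; exact absurd h3.symm ih.ne'
  have hrec : ∀ n, τ (w (n + 1)) = w n := by
    intro n; rw [hwsucc]; exact (hg (w n) (hwpos n).le).2.2
  have hdec : ∀ n, w (n + 1) ≤ w n := by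
    intro n; rw [hwsucc]; exact (hg (w n) (hwpos n).le).2.1
  have hanti : Antitone w := antitone_nat_of_succ_le hdec
  have hwle1 : ∀ n, w n ≤ 1 := by
    intro n
    calc w n ≤ w 0 := hanti (Nat.zero_le n)
    _ = 1 := hw0
  have hiter : ∀ n, τ^[n] (w n) = 1 := by
    intro n
    induction n with
    | zero => exact hw0
    | succ n ih =>
      rw [Function.iterate_succ_apply, hrec n, ih]
  refine ⟨1, ⟨one_pos, le_refl 1⟩, ?_⟩
  by_contra hfin
  rw [Set.not_infinite] at hfin
  obtain ⟨N, hN⟩ := hfin.bddAbove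
  -- w n ≤ φ n for all n > N
  have hbound : ∀ n, N < n → w n ≤ φ n := by
    intro n hn
    by_contra hlt
    push_neg at hlt
    have : n ∈ {n : ℕ | ∃ w : ℝ, 0 ≤ w ∧ τ^[n] w = 1 ∧ φ n * 1 < w} :=
      ⟨w n, (hwpos n).le, hiter n, by rwa [mul_one]⟩
    exact absurd (hN this) (not_le.mpr hn)
  -- w is summable
  have hwsum : Summable w := by
    rw [← summable_nat_add_iff (N + 1)]
    apply Summable.of_nonneg_of_le (fun n => (hwpos _).le)
      (fun n => hbound (n + (N + 1)) (by omega))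
    exact (summable_nat_add_iff (N + 1)).mpr hφsum
  have hwtendsto : Filter.Tendsto w Filter.atTop (nhds 0) := hwsum.tendsto_atTop_zero
  -- pick m > N with a * tail < 1
  have htail : Filter.Tendsto (fun i => a * ∑' k, φ (k + i)) Filter.atTop (nhds 0) := by
    have := (tendsto_sum_nat_add φ).const_mul a
    simpa using this
  have hev : ∀ᶠ m in Filter.atTop, a * ∑' k, φ (k + (m + 1)) < 1 := by
    have h1 : Filter.Tendsto (fun m : ℕ => a * ∑' k, φ (k + (m + 1))) Filter.atTop (nhds 0) :=
      htail.comp (Filter.tendsto_add_atTop_nat 1)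
    exact h1.eventually_lt_const one_pos
  obtain ⟨m, hmN, hm⟩ : ∃ m, N < m ∧ a * ∑' k, φ (k + (m + 1)) < 1 := by
    obtain ⟨m, hm2⟩ := (Filter.eventually_atTop.mp hev)
    refine ⟨max m (N + 1), lt_of_lt_of_le (Nat.lt_succ_self N) (le_max_right _ _),
      hm2 _ (le_max_left _ _)⟩
  set T : ℝ := ∑' k, φ (k + (m + 1)) with hT_def
  have hT0 : 0 ≤ T := tsum_nonneg (fun k => hφ0 _)
  have hφtailsum : Summable (fun k => φ (k + (m + 1))) :=
    (summable_nat_add_iff (m + 1)).mpr hφsum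
  -- step: w k - w (k+1) = a * w (k+1) ^ (1+α)
  have hstep : ∀ k, w k - w (k + 1) = a * w (k + 1) ^ (1 + α) := by
    intro k
    have := hrec k
    rw [hτ] at this
    linarith
  -- term bound
  have hterm : ∀ j, a * w (m + j + 1) ^ (1 + α) ≤ a * (w (m + 1) * φ (j + (m + 1))) := by
    intro j
    apply mul_le_mul_of_nonneg_left _ ha.le
    have hp : 0 < w (m + j + 1) := hwpos _
    have h1 : w (m + j + 1) ^ (1 + α) = w (m + j + 1) * w (m + j + 1) ^ α := by
      rw [Real.rpow_add hp, Real.rpow_one]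
    have h2 : w (m + j + 1) ^ α ≤ w (m + j + 1) ^ (1:ℝ) :=
      Real.rpow_le_rpow_of_exponent_ge hp (hwle1 _) hα.le
    rw [Real.rpow_one] at h2
    have h3 : w (m + j + 1) ≤ w (m + 1) := hanti (by omega)
    have h4 : w (m + j + 1) ≤ φ (j + (m + 1)) := by
      have : m + j + 1 = j + (m + 1) := by omega
      rw [this]
      exact hbound _ (by omega)
    calc w (m + j + 1) ^ (1 + α) = w (m + j + 1) * w (m + j + 1) ^ α := h1
    _ ≤ w (m + 1) * φ (j + (m + 1)) :=
        mul_le_mul h3 (h2.trans h4) (Real.rpow_nonneg hp.le _) (hwpos _).le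
  -- telescoping
  have tele : ∀ J : ℕ, w m - w (m + J) = ∑ j ∈ Finset.range J, a * w (m + j + 1) ^ (1 + α) := by
    intro J
    have h1 : ∑ j ∈ Finset.range J, (w (m + j) - w (m + j + 1)) = w (m + 0) - w (m + J) :=
      Finset.sum_range_sub' (fun j => w (m + j)) J
    rw [add_zero] at h1
    rw [← h1]
    apply Finset.sum_congr rfl
    intro j _
    exact hstep (m + j)
  have hsumb : ∀ J : ℕ, w m - w (m + J) ≤ a * (w (m + 1) * T) := by
    intro J
    rw [tele J]
    calc ∑ j ∈ Finset.range J, a * w (m + j + 1) ^ (1 + α)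
        ≤ ∑ j ∈ Finset.range J, a * (w (m + 1) * φ (j + (m + 1))) :=
          Finset.sum_le_sum (fun j _ => hterm j)
      _ = a * w (m + 1) * ∑ j ∈ Finset.range J, φ (j + (m + 1)) := by
          rw [Finset.mul_sum]; apply Finset.sum_congr rfl; intro j _; ring
      _ ≤ a * w (m + 1) * T := by
          apply mul_le_mul_of_nonneg_left _ (mul_nonneg ha.le (hwpos _).le)
          exact Summable.sum_le_tsum (Finset.range J) (fun i _ => hφ0 _) hφtailsum
      _ = a * (w (m + 1) * T) := by ring
  -- take limit J → ∞
  have hlim : Filter.Tendsto (fun J => w m - w (m + J)) Filter.atTop (nhds (w m)) := by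
    have h1 : Filter.Tendsto (fun J : ℕ => w (m + J)) Filter.atTop (nhds 0) := by
      have := hwtendsto.comp (Filter.tendsto_add_atTop_nat m)
      simpa [Function.comp_def, Nat.add_comm] using this
    simpa using (tendsto_const_nhds.sub h1 : Filter.Tendsto (fun J => w m - w (m + J))
      Filter.atTop (nhds (w m - 0)))
  have hwm : w m ≤ a * (w (m + 1) * T) :=
    le_of_tendsto hlim (Filter.Eventually.of_forall hsumb)
  have hcontra : w m < w (m + 1) := by
    calc w m ≤ a * (w (m + 1) * T) := hwm
      _ = w (m + 1) * (a * T) := by ring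
      _ < w (m + 1) * 1 := by
          exact mul_lt_mul_of_pos_left hm (hwpos (m + 1))
      _ = w (m + 1) := mul_one _
  exact absurd (hdec m) (not_le.mpr hcontra)
end
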